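/- Let C ⊆ (ℤ/4ℤ)^8 be the ℤ/4ℤ-linear code generated by the rows of the 4×8 matrix whose columns are (1,0,0,0), (0,1,0,0), (0,0,1,0), (0,0,0,1), (1,3,3,2), (2,1,3,3), (1,2,1,3), (1,1,2,1). Then C has exactly 256 codewords, and its image under the coordinatewise Gray map is a binary code of length 16 with 256 codewords, minimum Hamming distance 6, and Hamming weight distribution 1 + 112·X^6 + 30·X^8 + 112·X^10 + X^16 (this is the Nordstrom–Robinson code). -/

import Mathlib

set_option maxRecDepth 100000
set_option maxHeartbeats 4000000

/-- The Gray map ℤ/4ℤ → 𝔽₂²: 0 ↦ 00, 1 ↦ 01, 2 ↦ 11, 3 ↦ 10. -/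
def gray (a : ZMod 4) : Fin 2 → ZMod 2 :=
  if a = 0 then ![0, 0] else if a = 1 then ![0, 1] else if a = 2 then ![1, 1] else ![1, 0]

/-- The coordinatewise Gray map (ℤ/4ℤ)ⁿ → 𝔽₂^(2n). -/
def grayWord {n : ℕ} (v : Fin n → ZMod 4) : Fin n × Fin 2 → ZMod 2 :=
  fun p => gray (v p.1) p.2

/-- The generator matrix whose columns are (1,0,0,0), (0,1,0,0), (0,0,1,0),
(0,0,0,1), (1,3,3,2), (2,1,3,3), (1,2,1,3), (1,1,2,1). -/
def G8 : Fin 4 → Fin 8 → ZMod 4 :=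
  ![![1,0,0,0,1,2,1,1], ![0,1,0,0,3,1,2,1], ![0,0,1,0,3,3,1,2], ![0,0,0,1,2,3,3,1]]

/-- The ℤ/4ℤ-linear code generated by the rows of `G8`. -/
def C8 : Submodule (ZMod 4) (Fin 8 → ZMod 4) := Submodule.span (ZMod 4) (Set.range G8)

/-- The binary Gray image of `C8`, of length 16 (the Nordstrom–Robinson code). -/
def B16 : Set (Fin 8 × Fin 2 → ZMod 2) := grayWord '' (C8 : Set (Fin 8 → ZMod 4))

def F (c : Fin 4 → ZMod 4) : Fin 8 → ZMod 4 := fun j => ∑ i, c i • G8 i j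

lemma C8_eq : (C8 : Set (Fin 8 → ZMod 4)) = Set.range F := by
  rw [C8, ← Fintype.range_linearCombination (ZMod 4) G8]
  ext x
  simp only [SetLike.mem_coe, LinearMap.mem_range, Set.mem_range,
    Fintype.linearCombination_apply]
  constructor
  · rintro ⟨c, rfl⟩; exact ⟨c, by funext j; simp [F, Finset.sum_apply]⟩
  · rintro ⟨c, rfl⟩; exact ⟨c, by funext j; simp [F, Finset.sum_apply]⟩

lemma F_inj : Function.Injective F := by
  intro c d h
  have h0 := congrFun h 0
  have h1 := congrFun h 1
  have h2 := congrFun h 2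
  have h3 := congrFun h 3
  simp [F, G8, Fin.sum_univ_four, Matrix.vecHead, Matrix.vecTail] at h0 h1 h2 h3
  funext i
  fin_cases i <;> assumption

lemma F_sub (c d : Fin 4 → ZMod 4) : F c - F d = F (c - d) := by
  funext j
  simp only [F, smul_eq_mul, Pi.sub_apply, ← Finset.sum_sub_distrib, sub_mul]

lemma gray_inj : Function.Injective gray := by decide

lemma grayWord_inj {n : ℕ} : Function.Injective (grayWord (n := n)) := by
  intro u v h
  funext j
  exact gray_inj (funext fun k => congrFun h (j, k))

lemma iso (u v : Fin 8 → ZMod 4) :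
    hammingDist (grayWord u) (grayWord v) = hammingNorm (grayWord (u - v)) := by
  have key : ∀ a b : ZMod 4,
      (∑ k : Fin 2, if gray a k ≠ gray b k then 1 else 0) =
      (∑ k : Fin 2, if gray (a - b) k ≠ 0 then 1 else 0) := by decide
  simp only [hammingDist, hammingNorm, Finset.card_filter, Fintype.sum_prod_type]
  exact Finset.sum_congr rfl fun j _ => by
    have hk := key (u j) (v j)
    simp only [Fin.sum_univ_two, ne_eq] at hk
    simp only [grayWord, Pi.sub_apply, Fin.sum_univ_two]
    convert hk using 2 <;> congr 1 <;> exact Subsingleton.elim _ _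

lemma B16_eq : B16 = Set.range (fun c => grayWord (F c)) := by
  rw [B16, C8_eq, ← Set.image_univ, Set.image_image, Set.image_univ]

lemma GF_inj : Function.Injective (fun c => grayWord (F c)) :=
  grayWord_inj.comp F_inj

lemma min_wt : ∀ e : Fin 4 → ZMod 4, e ≠ 0 → 6 ≤ hammingNorm (grayWord (F e)) := by
  decide

lemma card_w0 : (Finset.univ.filter
    (fun c : Fin 4 → ZMod 4 => hammingNorm (grayWord (F c)) = 0)).card = 1 := by decide
lemma card_w6 : (Finset.univ.filter
    (fun c : Fin 4 → ZMod 4 => hammingNorm (grayWord (F c)) = 6)).card = 112 := by decide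
lemma card_w8 : (Finset.univ.filter
    (fun c : Fin 4 → ZMod 4 => hammingNorm (grayWord (F c)) = 8)).card = 30 := by decide
lemma card_w10 : (Finset.univ.filter
    (fun c : Fin 4 → ZMod 4 => hammingNorm (grayWord (F c)) = 10)).card = 112 := by decide
lemma card_w16 : (Finset.univ.filter
    (fun c : Fin 4 → ZMod 4 => hammingNorm (grayWord (F c)) = 16)).card = 1 := by decide
lemma wt_vals : ∀ c : Fin 4 → ZMod 4, hammingNorm (grayWord (F c)) = 0 ∨
    hammingNorm (grayWord (F c)) = 6 ∨ hammingNorm (grayWord (F c)) = 8 ∨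
    hammingNorm (grayWord (F c)) = 10 ∨ hammingNorm (grayWord (F c)) = 16 := by decide

lemma wt_ex : hammingNorm (grayWord (F ![0,0,0,1])) = 6 := by decide

/-- `C8` has 256 codewords and its Gray image is a binary code of length 16 with
256 codewords, minimum Hamming distance 6 and weight enumerator
1 + 112·X⁶ + 30·X⁸ + 112·X¹⁰ + X¹⁶ (the Nordstrom–Robinson code). -/
theorem nordstrom_robinson :
    Nat.card C8 = 256 ∧ B16.ncard = 256 ∧
    (∀ x ∈ B16, ∀ y ∈ B16, x ≠ y → 6 ≤ hammingDist x y) ∧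
    (∃ x ∈ B16, ∃ y ∈ B16, hammingDist x y = 6) ∧
    (∀ w : ℕ, {x ∈ B16 | hammingNorm x = w}.ncard =
      if w = 0 then 1 else if w = 6 then 112 else if w = 8 then 30 else
        if w = 10 then 112 else if w = 16 then 1 else 0) := by
  have hcard256 : Nat.card (Fin 4 → ZMod 4) = 256 := by
    simp [Nat.card_eq_fintype_card]
  refine ⟨?_, ?_, ?_, ?_, ?_⟩
  · have : Nat.card C8 = (C8 : Set (Fin 8 → ZMod 4)).ncard :=
      Nat.card_coe_set_eq _
    rw [this, C8_eq, ← Set.image_univ, Set.ncard_image_of_injective _ F_inj,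
      Set.ncard_univ, hcard256]
  · rw [B16_eq, ← Set.image_univ, Set.ncard_image_of_injective _ GF_inj,
      Set.ncard_univ, hcard256]
  · rintro x hx y hy hxy
    rw [B16_eq] at hx hy
    obtain ⟨c, rfl⟩ := hx
    obtain ⟨d, rfl⟩ := hy
    rw [iso, F_sub]
    exact min_wt _ (sub_ne_zero.mpr fun h => hxy (by rw [h]))
  · refine ⟨grayWord (F ![0,0,0,1]), ?_, grayWord (F 0), ?_, ?_⟩
    · rw [B16_eq]; exact ⟨_, rfl⟩
    · rw [B16_eq]; exact ⟨_, rfl⟩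
    · rw [iso]
      have h0 : F (0 : Fin 4 → ZMod 4) = 0 := by
        funext j; simp [F]
      rw [h0, sub_zero, wt_ex]
  · intro w
    have hset : {x ∈ B16 | hammingNorm x = w} =
        (fun c => grayWord (F c)) '' {c | hammingNorm (grayWord (F c)) = w} := by
      rw [B16_eq]
      ext x
      constructor
      · rintro ⟨⟨c, rfl⟩, hw⟩; exact ⟨c, hw, rfl⟩
      · rintro ⟨c, hw, rfl⟩; exact ⟨⟨c, rfl⟩, hw⟩
    rw [hset, Set.ncard_image_of_injective _ GF_inj,
      Set.ncard_eq_toFinset_card', Set.toFinset_setOf]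
    by_cases h0 : w = 0
    · subst h0; simpa using card_w0
    by_cases h6 : w = 6
    · subst h6; simpa [h0] using card_w6
    by_cases h8 : w = 8
    · subst h8; simpa [h0, h6] using card_w8
    by_cases h10 : w = 10
    · subst h10; simpa [h0, h6, h8] using card_w10
    by_cases h16 : w = 16
    · subst h16; simpa [h0, h6, h8, h10] using card_w16
    · simp only [h0, h6, h8, h10, h16, if_false]
      rw [Finset.card_eq_zero, Finset.filter_eq_empty_iff]
      intro c _
      rcases wt_vals c with h | h | h | h | h <;> omega
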